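/- Let G = C_n ⋊ C_k be a semidirect product of cyclic groups with trivial center. Then Aut(G) is isomorphic to the holomorph Hol(C_n) = C_n ⋊ Aut(C_n). -/
import Mathlib

open SemidirectProduct

namespace WallsAux

variable {H K : Type} [Group H] [Group K] [IsCyclic H] (φ : K →* MulAut H)

lemma aut_comm (α : MulAut H) (y : K) (x : H) : α (φ y x) = φ y (α x) := by
  obtain ⟨m, hm⟩ := MonoidHom.map_cyclic α.toMonoidHom
  simp only [MulEquiv.coe_toMonoidHom] at hm
  rw [hm, hm, map_zpow]

/-- Extend an automorphism of `H` to `H ⋊[φ] K`, acting trivially on `K`. -/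
def extAut : MulAut H →* MulAut (H ⋊[φ] K) where
  toFun α :=
    { toFun := fun g => ⟨α g.left, g.right⟩
      invFun := fun g => ⟨α.symm g.left, g.right⟩
      left_inv := fun g => by simp
      right_inv := fun g => by simp
      map_mul' := fun g g' => by
        ext
        · simp [aut_comm φ α]
        · rfl }
  map_one' := MulEquiv.ext fun g => rfl
  map_mul' := fun a b => MulEquiv.ext fun g => rfl

lemma extAut_apply (α : MulAut H) (g : H ⋊[φ] K) : extAut φ α g = ⟨α g.left, g.right⟩ := rfl

lemma extAut_inl (α : MulAut H) (x : H) : extAut φ α (inl x) = inl (α x) := rfl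

/-- The candidate isomorphism `Hol(H) →* Aut(H ⋊ K)`. -/
def bigF : (H ⋊[MonoidHom.id (MulAut H)] MulAut H) →* MulAut (H ⋊[φ] K) :=
  lift (MulAut.conj.comp inl) (extAut φ) (by
    intro α
    refine MonoidHom.ext fun h' => MulEquiv.ext fun x => ?_
    show MulAut.conj (inl (α h')) x
        = ((extAut φ α * MulAut.conj (inl h') * (extAut φ α)⁻¹ : MulAut (H ⋊[φ] K))) x
    simp only [MulAut.mul_apply, MulAut.conj_apply, map_mul, map_inv,
      MulAut.apply_inv_self, extAut_inl])

lemma bigF_apply (p : H ⋊[MonoidHom.id (MulAut H)] MulAut H) :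
    bigF φ p = MulAut.conj (inl p.left) * extAut φ p.right := rfl

end WallsAux

open WallsAux

/-- Walls: if `G = C_n ⋊ C_k` has trivial center, then
`Aut(G) ≅ Hol(C_n) = C_n ⋊ Aut(C_n)`. -/
theorem aut_of_centerless_semidirect_of_cyclics
    {H K : Type} [Group H] [Group K] [Finite H] [Finite K]
    [IsCyclic H] [IsCyclic K] (φ : K →* MulAut H)
    (hZ : Subgroup.center (H ⋊[φ] K) = ⊥) :
    Nonempty (MulAut (H ⋊[φ] K) ≃* H ⋊[MonoidHom.id (MulAut H)] MulAut H) := by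
  -- basic commutativity facts
  have hHc : ∀ a b : H, a * b = b * a := fun a b => by
    letI := IsCyclic.commGroup (α := H); exact mul_comm a b
  have hKc : ∀ a b : K, a * b = b * a := fun a b => by
    letI := IsCyclic.commGroup (α := K); exact mul_comm a b
  -- trivial center, elementwise
  have hcent : ∀ g : H ⋊[φ] K, (∀ x, x * g = g * x) → g = 1 := fun g hg => by
    have : g ∈ Subgroup.center (H ⋊[φ] K) := Subgroup.mem_center_iff.mpr hg
    rwa [hZ, Subgroup.mem_bot] at this
  -- the action has no nontrivial fixed points
  have hfix : ∀ h : H, (∀ y : K, φ y h = h) → h = 1 := fun h hh => by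
    have h1 : (inl h : H ⋊[φ] K) = 1 := by
      refine hcent _ fun x => ?_
      ext
      · show x.left * φ x.right h = h * φ (1 : K) x.left
        rw [hh x.right, map_one, MulAut.one_apply, hHc]
      · show x.right * 1 = 1 * x.right
        rw [mul_one, one_mul]
    have := congrArg SemidirectProduct.left h1
    simpa using this
  -- φ is injective
  have hφinj : Function.Injective φ := by
    refine (injective_iff_map_eq_one φ).mpr fun y hy => ?_
    have h1 : (inr y : H ⋊[φ] K) = 1 := by
      refine hcent _ fun x => ?_
      ext
      · show x.left * φ x.right 1 = 1 * φ y x.left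
        rw [map_one, mul_one, one_mul, hy, MulAut.one_apply]
      · show x.right * y = y * x.right
        exact hKc _ _
    have := congrArg SemidirectProduct.right h1
    simpa using this
  -- generator of K
  obtain ⟨b₀, hb₀⟩ := IsCyclic.exists_generator (α := K)
  -- fixed points of φ b₀ are trivial
  have hfixb : ∀ h : H, φ b₀ h = h → h = 1 := fun h hh => by
    refine hfix h fun y => ?_
    obtain ⟨m, rfl⟩ := Subgroup.mem_zpowers_iff.mp (hb₀ y)
    have hb : φ b₀ ∈ MulAction.stabilizer (MulAut H) h :=
      MulAction.mem_stabilizer_iff.mpr hh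
    have := zpow_mem hb m
    rw [map_zpow]
    exact MulAction.mem_stabilizer_iff.mp this
  -- the "twisted difference" homomorphism
  let δ : H →* H :=
    { toFun := fun x => x * (φ b₀ x)⁻¹
      map_one' := by simp
      map_mul' := fun a b => by
        letI := IsCyclic.commGroup (α := H)
        show a * b * (φ b₀ (a * b))⁻¹ = a * (φ b₀ a)⁻¹ * (b * (φ b₀ b)⁻¹)
        rw [map_mul, mul_inv]
        exact mul_mul_mul_comm a b (φ b₀ a)⁻¹ (φ b₀ b)⁻¹ }
  have hδ : ∀ x : H, δ x = x * (φ b₀ x)⁻¹ := fun _ => rfl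
  have hδinj : Function.Injective δ := by
    refine (injective_iff_map_eq_one δ).mpr fun x hx => ?_
    rw [hδ, mul_inv_eq_one] at hx
    exact hfixb x hx.symm
  have hδsurj : Function.Surjective δ := Finite.injective_iff_surjective.mp hδinj
  have hδ'surj : ∀ x : H, ∃ h : H, φ b₀ h * h⁻¹ = x := fun x => by
    obtain ⟨h, hh⟩ := hδsurj x⁻¹
    rw [hδ] at hh
    exact ⟨h, by rw [← inv_inv x, ← hh, mul_inv_rev, inv_inv]⟩
  -- H (as inl H) is invariant under every automorphism
  have hchar : ∀ (σ : MulAut (H ⋊[φ] K)) (x : H), (σ (inl x)).right = 1 := by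
    intro σ x
    obtain ⟨h, hh⟩ := hδ'surj x
    have h1 : (inr b₀ : H ⋊[φ] K) * inl h * (inr b₀)⁻¹ = inl (φ b₀ h) := by
      rw [← map_inv]; exact (inl_aut b₀ h).symm
    have hx : (inl x : H ⋊[φ] K) = inr b₀ * inl h * (inr b₀)⁻¹ * (inl h)⁻¹ := by
      rw [← hh, map_mul, ← h1, map_inv]
    have h2 := congrArg (rightHom (φ := φ)) (congrArg σ hx)
    simp only [map_mul, map_inv, rightHom_eq_right] at h2
    rw [h2]
    have : ∀ a b : K, a * b * a⁻¹ * b⁻¹ = 1 := fun a b => by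
      rw [hKc a b]; group
    exact this _ _
  -- conjugation by elements of inl H fixes inl H pointwise
  have hconjinl : ∀ (a x : H), MulAut.conj (inl a : H ⋊[φ] K) (inl x) = inl x := fun a x => by
    show (inl a : H ⋊[φ] K) * inl x * (inl a)⁻¹ = inl x
    rw [← map_mul, ← map_inv, ← map_mul, hHc a x, mul_inv_cancel_right]
  -- injectivity of bigF
  have hFinj : Function.Injective (bigF φ) := by
    refine (injective_iff_map_eq_one (bigF φ)).mpr fun p hp => ?_
    have hp' : MulAut.conj (inl p.left : H ⋊[φ] K) * extAut φ p.right = 1 := by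
      rw [← bigF_apply]; exact hp
    have hα1 : p.right = 1 := by
      refine MulEquiv.ext fun x => ?_
      have h1 := congrArg (fun f : MulAut (H ⋊[φ] K) => f (inl x)) hp'
      simp only [MulAut.mul_apply, MulAut.one_apply] at h1
      rw [extAut_inl, hconjinl] at h1
      exact inl_injective h1
    rw [hα1, map_one, mul_one] at hp'
    have hcentral : (inl p.left : H ⋊[φ] K) = 1 := by
      refine hcent _ fun x => ?_
      have h1 := congrArg (fun f : MulAut (H ⋊[φ] K) => f x) hp'
      simp only [MulAut.conj_apply, MulAut.one_apply] at h1
      rw [mul_inv_eq_iff_eq_mul] at h1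
      exact h1.symm
    have hh1 : p.left = 1 := by
      have := congrArg SemidirectProduct.left hcentral
      simpa using this
    exact SemidirectProduct.ext hh1 hα1
  -- surjectivity of bigF
  have hFsurj : Function.Surjective (bigF φ) := by
    intro σ
    -- the automorphism of H induced by σ
    let α₀ : H →* H :=
      { toFun := fun x => (σ (inl x)).left
        map_one' := by simp
        map_mul' := fun a b => by
          show (σ (inl (a * b))).left = (σ (inl a)).left * (σ (inl b)).left
          rw [map_mul, map_mul, mul_left, hchar σ a, map_one, MulAut.one_apply] }
    have hσinl : ∀ x : H, σ (inl x) = inl (α₀ x) := fun x => by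
      ext
      · rfl
      · show (σ (inl x)).right = 1
        exact hchar σ x
    have hα₀inj : Function.Injective α₀ := by
      refine (injective_iff_map_eq_one α₀).mpr fun x hx => ?_
      have h1 : σ (inl x) = σ 1 := by rw [hσinl, hx, map_one, map_one]
      have h2 := σ.injective h1
      rw [← map_one inl] at h2
      exact inl_injective h2
    let α : MulAut H := MulEquiv.ofBijective α₀
      ⟨hα₀inj, Finite.injective_iff_surjective.mp hα₀inj⟩
    have hα : ∀ x, α x = α₀ x := fun _ => rfl
    set e : MulAut (H ⋊[φ] K) := extAut φ α with he
    set β : MulAut (H ⋊[φ] K) := σ * e⁻¹ with hβdef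
    have hβinl : ∀ x : H, β (inl x) = inl x := fun x => by
      have h1 : e (inl (α.symm x)) = inl x := by
        rw [he, extAut_inl, MulEquiv.apply_symm_apply]
      have h2 : e⁻¹ (inl x : H ⋊[φ] K) = inl (α.symm x) := by
        rw [← h1, MulAut.inv_apply_self]
      show σ (e⁻¹ (inl x)) = inl x
      rw [h2, hσinl, ← hα, MulEquiv.apply_symm_apply]
    have hβr : ∀ y : K, (β (inr y)).right = y := by
      intro y
      have key : ∀ x : H, φ y x = φ ((β (inr y)).right) x := by
        intro x
        have h1 : (inl (φ y x) : H ⋊[φ] K) = β (inr y) * inl x * (β (inr y))⁻¹ :=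
          calc (inl (φ y x) : H ⋊[φ] K) = β (inl (φ y x)) := (hβinl _).symm
            _ = β (inr y * inl x * (inr y)⁻¹) := by rw [inl_aut, map_inv]
            _ = β (inr y) * inl x * (β (inr y))⁻¹ := by
                rw [map_mul, map_mul, map_inv, hβinl]
        have h2 := congrArg SemidirectProduct.left h1
        set b := β (inr y) with hb
        simp only [left_inl, mul_left, mul_right, inv_left, inv_right, right_inl,
          mul_one, map_inv, MulAut.apply_inv_self] at h2
        rw [hHc b.left (φ b.right x), mul_inv_cancel_right] at h2
        exact h2
      have hφeq : φ y = φ ((β (inr y)).right) := MulEquiv.ext key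
      exact (hφinj hφeq).symm
    -- β is conjugation by a suitable element of inl H
    obtain ⟨h, hh⟩ := hδsurj ((β (inr b₀)).left)
    have hβb₀ : β (inr b₀) = MulAut.conj (inl h : H ⋊[φ] K) (inr b₀) := by
      have hc : MulAut.conj (inl h : H ⋊[φ] K) (inr b₀) =
          (⟨h * (φ b₀ h)⁻¹, b₀⟩ : H ⋊[φ] K) := by
        show (inl h : H ⋊[φ] K) * inr b₀ * (inl h)⁻¹ = _
        ext <;> simp [map_inv]
      rw [hc]
      ext
      · show (β (inr b₀)).left = h * (φ b₀ h)⁻¹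
        rw [← hh]; exact hδ h
      · exact hβr b₀
    have hβ : β = MulAut.conj (inl h : H ⋊[φ] K) := by
      have hinr : ∀ y : K, β (inr y) = MulAut.conj (inl h : H ⋊[φ] K) (inr y) := by
        intro y
        obtain ⟨m, rfl⟩ := Subgroup.mem_zpowers_iff.mp (hb₀ y)
        rw [map_zpow inr, map_zpow β, map_zpow (MulAut.conj (inl h : H ⋊[φ] K)), hβb₀]
      refine MulEquiv.ext fun g => ?_
      conv_lhs => rw [← inl_left_mul_inr_right g]
      conv_rhs => rw [← inl_left_mul_inr_right g]
      rw [map_mul, map_mul, hβinl, hinr, hconjinl]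
    refine ⟨⟨h, α⟩, ?_⟩
    have : bigF φ (⟨h, α⟩ : H ⋊[MonoidHom.id (MulAut H)] MulAut H)
        = MulAut.conj (inl h : H ⋊[φ] K) * extAut φ α := bigF_apply φ _
    rw [this, ← hβ, hβdef]
    exact inv_mul_cancel_right σ e
  exact ⟨(MulEquiv.ofBijective (bigF φ) ⟨hFinj, hFsurj⟩).symm⟩
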